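/- Let Q be a real number with Q > 1/2 + Σ_{i=1}^k q_i. If there exists an integer S with R ≤ S < R + 2^r such that no subset I ⊆ {1, …, k} satisfies Σ_{i∈I} q_i = S, then the game has a pure Nash equilibrium. (Take w = S, w_0 = 0, z = S, z_0 = 1, and (z_1, …, z_k) maximizing Σ_{i=1}^k q_i·z_i subject to (1/2) + Σ_{i=1}^k q_i·z_i ≤ S; since z_0 = 1, Player W's payoff is identically 0, so every strategy of W is optimal.) -/
import Mathlib


open MeasureTheory

noncomputable section

/-- Player Z's strategy set `X_Z`: tuples `(z, z₀, (z₁,…,z_k))` with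
`R ≤ z ≤ R + 2^r − 1`, each `zᵢ ∈ {0,1}`, and `(1/2)·z₀ + Σᵢ qᵢ·zᵢ ≤ z`. -/
def inXZ (k : ℕ) (q : Fin k → ℕ) (R r : ℕ) (s : ℤ × ℤ × (Fin k → ℤ)) : Prop :=
  (R : ℤ) ≤ s.1 ∧ s.1 ≤ (R : ℤ) + 2 ^ r - 1 ∧
  (s.2.1 = 0 ∨ s.2.1 = 1) ∧ (∀ i, s.2.2 i = 0 ∨ s.2.2 i = 1) ∧
  (1 / 2 : ℝ) * (s.2.1 : ℝ) + ∑ i, (q i : ℝ) * (s.2.2 i : ℝ) ≤ (s.1 : ℝ)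

/-- Player W's strategy set `X_W`: pairs `(w, w₀)` with `R ≤ w ≤ R + 2^r − 1`,
`w` an integer and `w₀` an arbitrary real number. -/
def inXW (R r : ℕ) (t : ℤ × ℝ) : Prop :=
  (R : ℤ) ≤ t.1 ∧ t.1 ≤ (R : ℤ) + 2 ^ r - 1

/-- Player Z's payoff `Π_Z = (1/2)·z₀ + Σᵢ qᵢ·zᵢ + Q·z·(2w − z)`. -/
def payZ (k : ℕ) (q : Fin k → ℕ) (Q : ℝ) (s : ℤ × ℤ × (Fin k → ℤ)) (t : ℤ × ℝ) : ℝ :=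
  (1 / 2 : ℝ) * (s.2.1 : ℝ) + ∑ i, (q i : ℝ) * (s.2.2 i : ℝ)
    + Q * (s.1 : ℝ) * (2 * (t.1 : ℝ) - (s.1 : ℝ))

/-- Player W's payoff `Π_W = (1 − z₀)·w₀`. -/
def payW (k : ℕ) (s : ℤ × ℤ × (Fin k → ℤ)) (t : ℤ × ℝ) : ℝ :=
  (1 - (s.2.1 : ℝ)) * t.2

/-- A pure Nash equilibrium: each player's strategy is feasible and maximizes
that player's payoff over their own strategy set, the other strategy held fixed. -/
def pureNE (k : ℕ) (q : Fin k → ℕ) (R r : ℕ) (Q : ℝ)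
    (s : ℤ × ℤ × (Fin k → ℤ)) (t : ℤ × ℝ) : Prop :=
  inXZ k q R r s ∧ inXW R r t ∧
  (∀ s' : ℤ × ℤ × (Fin k → ℤ), inXZ k q R r s' → payZ k q Q s' t ≤ payZ k q Q s t) ∧
  (∀ t' : ℤ × ℝ, inXW R r t' → payW k s t' ≤ payW k s t)


lemma sum_cast_eq (k : ℕ) (q : Fin k → ℕ) (x : Fin k → ℤ) (hx : ∀ i, x i = 0 ∨ x i = 1) :
    ∑ i, (q i : ℝ) * (x i : ℝ)
      = ((∑ i ∈ Finset.univ.filter (fun i => x i = 1), (q i : ℤ) : ℤ) : ℝ) := by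
  push_cast
  rw [Finset.sum_filter]
  apply Finset.sum_congr rfl
  intro i _
  rcases hx i with h | h <;> simp [h]

/-- if `Q > 1/2 + Σᵢ qᵢ` and some integer `S` with
`R ≤ S < R + 2^r` is not a subset sum of the `qᵢ`, then the game has a pure
Nash equilibrium. -/
theorem stmt4 (k : ℕ) (q : Fin k → ℕ) (R r : ℕ) (Q : ℝ)
    (hq : ∀ i, 0 < q i) (hR : 0 < R) (hr : 0 < r) (hrk : r ≤ k)
    (hQ : Q > 1 / 2 + ∑ i, (q i : ℝ))
    (hS : ∃ S : ℤ, (R : ℤ) ≤ S ∧ S < (R : ℤ) + 2 ^ r ∧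
      ¬ ∃ I : Finset (Fin k), (∑ i ∈ I, (q i : ℤ)) = S) :
    ∃ (s : ℤ × ℤ × (Fin k → ℤ)) (t : ℤ × ℝ), pureNE k q R r Q s t := by
  obtain ⟨S, hS1, hS2, hS3⟩ := hS
  have hSpos : 0 < S := lt_of_lt_of_le (by exact_mod_cast hR) hS1
  set F := Finset.univ.filter (fun I : Finset (Fin k) => (∑ i ∈ I, (q i : ℤ)) ≤ S) with hF
  have hFne : (∅ : Finset (Fin k)) ∈ F := by
    simp only [hF, Finset.mem_filter, Finset.mem_univ, true_and, Finset.sum_empty]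
    omega
  obtain ⟨I₀, hI₀F, hI₀max⟩ := F.exists_max_image (fun I => ∑ i ∈ I, (q i : ℤ)) ⟨∅, hFne⟩
  set m : ℤ := ∑ i ∈ I₀, (q i : ℤ) with hm
  have hmS : m ≤ S - 1 := by
    have h1 : m ≤ S := by
      have := hI₀F; simp only [hF, Finset.mem_filter] at this; exact this.2
    have h2 : m ≠ S := fun h => hS3 ⟨I₀, h⟩
    omega
  have hmem : ∀ I ∈ F, (∑ i ∈ I, (q i : ℤ)) ≤ m := hI₀max
  have hinF : ∀ I : Finset (Fin k), (∑ i ∈ I, (q i : ℤ)) ≤ S → I ∈ F := by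
    intro I h; simp only [hF, Finset.mem_filter, Finset.mem_univ, true_and]; exact h
  have hmnn : (0:ℤ) ≤ m := Finset.sum_nonneg (fun i _ => Int.ofNat_nonneg _)
  have hQpos : 0 < Q := by
    have : (0:ℝ) ≤ ∑ i, (q i : ℝ) := Finset.sum_nonneg (fun i _ => Nat.cast_nonneg _)
    linarith
  refine ⟨(S, 1, fun i => if i ∈ I₀ then 1 else 0), (S, 0), ?_, ⟨hS1, by omega⟩, ?_, ?_⟩
  · refine ⟨hS1, by omega, Or.inr rfl, fun i => by by_cases h : i ∈ I₀ <;> simp [h], ?_⟩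
    have := sum_cast_eq k q (fun i => if i ∈ I₀ then 1 else 0)
      (fun i => by by_cases h : i ∈ I₀ <;> simp [h])
    simp only [this]
    have hfe : Finset.univ.filter (fun i => (if i ∈ I₀ then (1:ℤ) else 0) = 1) = I₀ := by
      ext i; by_cases h : i ∈ I₀ <;> simp [h]
    rw [hfe]
    have : ((m : ℤ) : ℝ) ≤ (S : ℝ) - 1 := by exact_mod_cast hmS
    simp only [← hm]
    push_cast
    linarith
  · rintro ⟨z', z₀', x'⟩ ⟨h1, h2, h3, h4, h5⟩
    have hsum := sum_cast_eq k q x' h4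
    have hfe : Finset.univ.filter (fun i => (if i ∈ I₀ then (1:ℤ) else 0) = 1) = I₀ := by
      ext i; by_cases h : i ∈ I₀ <;> simp [h]
    have hsum2 := sum_cast_eq k q (fun i => if i ∈ I₀ then 1 else 0)
      (fun i => by by_cases h : i ∈ I₀ <;> simp [h])
    rw [hfe] at hsum2
    dsimp only at h1 h2 h3 h4 h5
    simp only [payZ]
    rw [hsum, hsum2, ← hm]
    rw [hsum] at h5
    have hz₀le : ((z₀' : ℤ) : ℝ) ≤ 1 := by rcases h3 with h | h <;> simp [h]
    have hz₀nn : (0:ℝ) ≤ ((z₀' : ℤ) : ℝ) := by rcases h3 with h | h <;> simp [h]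
    have hmR : (0:ℝ) ≤ ((m : ℤ) : ℝ) := by exact_mod_cast hmnn
    set A : ℤ := ∑ i ∈ Finset.univ.filter (fun i => x' i = 1), (q i : ℤ) with hA
    by_cases hz : z' = S
    · subst hz
      have hAS : A ≤ z' := by
        have h5' : ((A:ℤ):ℝ) ≤ ((z':ℤ):ℝ) := by
          rcases h3 with h | h <;> rw [h] at h5 <;> push_cast at h5 ⊢ <;> linarith
        exact_mod_cast h5'
      have hAm : A ≤ m := hmem _ (hinF _ hAS)
      have hAmR : ((A:ℤ):ℝ) ≤ ((m:ℤ):ℝ) := by exact_mod_cast hAm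
      push_cast at hz₀le hAmR ⊢
      linarith
    · have hsq : (1:ℤ) ≤ (z' - S)^2 := by
        have h0 : z' - S ≠ 0 := by omega
        have := sq_pos_of_ne_zero h0
        omega
      have hsqR : (1:ℝ) ≤ ((z':ℝ) - (S:ℝ))^2 := by exact_mod_cast hsq
      have hMk : ((A:ℤ):ℝ) ≤ ∑ i, (q i : ℝ) := by
        rw [← hsum]
        apply Finset.sum_le_sum
        intro i _
        rcases h4 i with h | h <;> simp [h]
      nlinarith [mul_le_mul_of_nonneg_left hsqR (le_of_lt hQpos)]
  · rintro ⟨w', w₀'⟩ _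
    simp [payW]
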